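/- Let k be a field of characteristic 0 with i ∉ k and √2 ∈ k, and let γ ∈ k(i) with γ ≠ 0. Suppose L = k(i, ⁸√(-7γ²)) is Galois over k of degree 16 with Galois group generated by σ0: ζ8 ↦ ζ8, ⁸√(-7γ²) ↦ ζ8·⁸√(-7γ²) and σ1: ζ8 ↦ ζ8^ε, ⁸√(-7γ²) ↦ ⁸√(-7γ̄²) (γ̄ the conjugate of γ over k), with relations σ0^8 = σ1^2 = 1 and σ0σ1 = σ1σ0^7. Then one may take γ ∈ k. -/

import Mathlib

open IntermediateField

theorem klein_embedding_problem_16_7_aux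
    (F E : Type*) [Field F] [CharZero F] [Field E] [Algebra F E]
    [Algebra.IsAlgebraic F E]
    (h2k : ∃ s : F, s ^ 2 = 2)
    (ι ζ8 θ γ γb : E)
    (hι : ι ^ 2 = -1)
    (hζ8 : IsPrimitiveRoot ζ8 8)
    (hγ : γ ∈ IntermediateField.adjoin F {ι}) (hγ0 : γ ≠ 0)
    (τ : E ≃ₐ[F] E) (hτι : τ ι = -ι) (hτγ : τ γ = γb)
    (hθ : θ ^ 8 = -7 * γ ^ 2)
    (L : IntermediateField F E)
    (hL : L = IntermediateField.adjoin F {ι, θ})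
    (hGal : IsGalois F L)
    (σ0 σ1 : E ≃ₐ[F] E)
    (hσ0ζ : σ0 ζ8 = ζ8)
    (hσ0θ : σ0 θ = ζ8 * θ)
    (hσ1θ : (σ1 θ) ^ 8 = -7 * γb ^ 2)
    (hord1 : ∀ x ∈ L, (σ1 ^ 2) x = x)
    (hrel : ∀ x ∈ L, (σ0 * σ1) x = (σ1 * σ0 ^ 7) x) :
    ∃ (γ' : F) (θ' : E),
      θ' ^ 8 = -7 * (algebraMap F E γ') ^ 2 ∧
      L = IntermediateField.adjoin F {ι, θ'} := by
  classical
  haveI := hGal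
  haveI : CharZero E := charZero_of_injective_algebraMap (algebraMap F E).injective
  set K : IntermediateField F E := IntermediateField.adjoin F {ι} with hKdef
  have hιK : ι ∈ K := IntermediateField.subset_adjoin F {ι} rfl
  have hι0 : ι ≠ 0 := by
    intro h; rw [h] at hι; norm_num at hι
  have hθ0 : θ ≠ 0 := by
    intro h
    rw [h] at hθ
    have h2 : γ ^ 2 = 0 := by
      have h0 : (0 : E) = -7 * γ ^ 2 := by simpa using hθ
      linear_combination ((1:E)/7) * h0
    exact hγ0 (pow_eq_zero_iff (n := 2) (by norm_num) |>.mp h2)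
  have hζpow : ζ8 ^ 8 = 1 := hζ8.pow_eq_one
  have hζ4 : ζ8 ^ 4 = -1 := by
    have h := hζ8.pow_ne_one_of_pos_of_lt (l := 4) (by norm_num) (by norm_num)
    have h0 : (ζ8 ^ 4 - 1) * (ζ8 ^ 4 + 1) = 0 := by linear_combination hζpow
    rcases mul_eq_zero.mp h0 with h1 | h1
    · exact absurd (sub_eq_zero.mp h1) h
    · exact eq_neg_of_add_eq_zero_left h1
  -- decomposition of K = F ⊕ Fι
  have hP1 : ∀ x ∈ K, ∃ a b : F, x = algebraMap F E a + algebraMap F E b * ι := by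
    have hmem1 : (1:E) ∈ Submodule.span F ({1, ι} : Set E) := Submodule.subset_span (by simp)
    have hmemι : ι ∈ Submodule.span F ({1, ι} : Set E) := Submodule.subset_span (by simp)
    have hmul : ∀ x y : E, x ∈ Submodule.span F ({1, ι} : Set E) →
        y ∈ Submodule.span F ({1, ι} : Set E) →
        x * y ∈ Submodule.span F ({1, ι} : Set E) := by
      have hgen : ∀ z ∈ ({1, ι} : Set E), ∀ y ∈ Submodule.span F ({1, ι} : Set E),
          z * y ∈ Submodule.span F ({1, ι} : Set E) := by
        rintro z hz y hy
        induction hy using Submodule.span_induction with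
        | mem w hw =>
          have hz' : z = 1 ∨ z = ι := hz
          have hw' : w = 1 ∨ w = ι := hw
          rcases hz' with h | h <;> rcases hw' with h' | h' <;> rw [h, h']
          · simpa using hmem1
          · simpa using hmemι
          · simpa using hmemι
          · have hii : ι * ι = (-1 : F) • (1 : E) := by
              have h2 : ι * ι = -1 := by linear_combination hι
              rw [h2]; simp
            rw [hii]
            exact Submodule.smul_mem _ _ hmem1
        | zero => simpa using Submodule.zero_mem _
        | add u v hu hv ihu ihv => rw [mul_add]; exact Submodule.add_mem _ ihu ihv
        | smul a u hu ihu => rw [mul_smul_comm]; exact Submodule.smul_mem _ _ ihu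
      intro x y hx hy
      induction hx using Submodule.span_induction with
      | mem w hw => exact hgen w hw y hy
      | zero => simpa using Submodule.zero_mem _
      | add u v hu hv ihu ihv => rw [add_mul]; exact Submodule.add_mem _ ihu ihv
      | smul a u hu ihu => rw [smul_mul_assoc]; exact Submodule.smul_mem _ _ ihu
    intro x hx
    have halg : ∀ y ∈ ({ι} : Set E), IsAlgebraic F y := fun y _ => Algebra.IsAlgebraic.isAlgebraic y
    have hxa : x ∈ Algebra.adjoin F ({ι} : Set E) := by
      rw [← IntermediateField.adjoin_toSubalgebra_of_isAlgebraic halg]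
      exact hx
    have hle : Algebra.adjoin F ({ι} : Set E) ≤
        (Submodule.span F ({1, ι} : Set E)).toSubalgebra
          hmem1 hmul := by
      apply Algebra.adjoin_le
      intro z hz
      rcases hz with rfl
      exact Submodule.subset_span (by simp)
    have hxs : x ∈ Submodule.span F ({1, ι} : Set E) := hle hxa
    obtain ⟨a, b, hab⟩ := Submodule.mem_span_pair.mp hxs
    exact ⟨a, b, by rw [← hab, Algebra.smul_def, Algebra.smul_def, mul_one]⟩
  -- ζ8 lies in K, and conjugation facts
  obtain ⟨s, hs⟩ := h2k
  have hS2 : (ζ8 + ζ8 ^ 7) ^ 2 = 2 := by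
    linear_combination (ζ8^10 - ζ8^6 + 2*ζ8^4 + ζ8^2 - 2) * hζ4
  have hsE : (algebraMap F E s) ^ 2 = 2 := by
    rw [← map_pow, hs, map_ofNat]
  have hS0 : ζ8 + ζ8 ^ 7 ≠ 0 := by
    intro h; rw [h] at hS2; norm_num at hS2
  have hScases : ζ8 + ζ8 ^ 7 = algebraMap F E s ∨ ζ8 + ζ8 ^ 7 = -algebraMap F E s := by
    have h0 : (ζ8 + ζ8^7 - algebraMap F E s) * (ζ8 + ζ8^7 + algebraMap F E s) = 0 := by
      linear_combination hS2 - hsE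
    rcases mul_eq_zero.mp h0 with h | h
    · exact Or.inl (by linear_combination h)
    · exact Or.inr (by linear_combination h)
  have hSK : ζ8 + ζ8 ^ 7 ∈ K := by
    rcases hScases with h | h <;> rw [h]
    · exact K.algebraMap_mem s
    · exact K.neg_mem (K.algebraMap_mem s)
  have hζsq : ζ8 ^ 2 = ι ∨ ζ8 ^ 2 = -ι := by
    have h0 : (ζ8^2 - ι) * (ζ8^2 + ι) = 0 := by linear_combination hζ4 - hι
    rcases mul_eq_zero.mp h0 with h | h
    · exact Or.inl (sub_eq_zero.mp h)
    · exact Or.inr (eq_neg_of_add_eq_zero_left h)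
  have hζS : ζ8 * (ζ8 + ζ8 ^ 7) = 1 + ζ8 ^ 2 := by linear_combination hζpow
  have hζ7S : ζ8 ^ 7 * (ζ8 + ζ8 ^ 7) = 1 - ζ8 ^ 2 := by
    linear_combination hζpow + ζ8^2*(ζ8^8 - ζ8^4 + 1)*hζ4
  have hζK : ζ8 ∈ K := by
    have h1 : ζ8 = (1 + ζ8 ^ 2) * (ζ8 + ζ8 ^ 7)⁻¹ := by
      rw [← hζS, mul_inv_cancel_right₀ hS0]
    rw [h1]
    refine K.mul_mem ?_ (K.inv_mem hSK)
    rcases hζsq with h | h <;> rw [h]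
    · exact K.add_mem K.one_mem hιK
    · exact K.add_mem K.one_mem (K.neg_mem hιK)
  have hconjζ : ∀ ψ : E ≃ₐ[F] E, ψ ι = -ι → ψ ζ8 = ζ8 ^ 7 := by
    intro ψ hψ
    have hψS : ψ (ζ8 + ζ8 ^ 7) = ζ8 + ζ8 ^ 7 := by
      rcases hScases with h | h <;> rw [h]
      · exact ψ.commutes s
      · rw [map_neg, ψ.commutes s]
    have hψζ2 : ψ (ζ8 ^ 2) = -ζ8 ^ 2 := by
      rcases hζsq with h | h <;> rw [h]
      · exact hψ
      · rw [map_neg, hψ, neg_neg]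
    have key : ψ ζ8 * (ζ8 + ζ8 ^ 7) = ζ8 ^ 7 * (ζ8 + ζ8 ^ 7) := by
      have h2 : ψ ζ8 * ψ (ζ8 + ζ8 ^ 7) = ψ (1 + ζ8 ^ 2) := by rw [← map_mul, hζS]
      rw [hψS, map_add, map_one, hψζ2] at h2
      rw [h2, hζ7S]; ring
    exact mul_right_cancel₀ hS0 key
  have hτζ : τ ζ8 = ζ8 ^ 7 := hconjζ τ hτι
  have hfixK : ∀ ψ : E ≃ₐ[F] E, ψ ι = ι → ∀ x ∈ K, ψ x = x := by
    intro ψ hψ x hx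
    obtain ⟨a, b, rfl⟩ := hP1 x hx
    rw [map_add, map_mul, ψ.commutes, ψ.commutes, hψ]
  have hconjK : ∀ ψ₁ ψ₂ : E ≃ₐ[F] E, ψ₁ ι = -ι → ψ₂ ι = -ι → ∀ x ∈ K, ψ₁ x = ψ₂ x := by
    intro ψ₁ ψ₂ h1 h2 x hx
    obtain ⟨a, b, rfl⟩ := hP1 x hx
    rw [map_add, map_add, map_mul, map_mul, ψ₁.commutes, ψ₁.commutes,
      ψ₂.commutes, ψ₂.commutes, h1, h2]
  have hτK : ∀ x ∈ K, τ x ∈ K := by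
    intro x hx; obtain ⟨a, b, rfl⟩ := hP1 x hx
    rw [map_add, map_mul, τ.commutes, τ.commutes, hτι]
    exact K.add_mem (K.algebraMap_mem a) (K.mul_mem (K.algebraMap_mem b) (K.neg_mem hιK))
  have hτfix : ∀ x ∈ K, τ x = x → ∃ a : F, x = algebraMap F E a := by
    intro x hx hfx
    obtain ⟨a, b, rfl⟩ := hP1 x hx
    rw [map_add, map_mul, τ.commutes, τ.commutes, hτι] at hfx
    have hb : algebraMap F E b * ι = 0 := by linear_combination (-(1:E)/2) * hfx
    rcases mul_eq_zero.mp hb with h | h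
    · exact ⟨a, by rw [h]; ring⟩
    · exact absurd h hι0
  have hτ2 : ∀ x ∈ K, τ (τ x) = x := by
    intro x hx; obtain ⟨a, b, rfl⟩ := hP1 x hx
    rw [map_add, map_mul, τ.commutes, τ.commutes, hτι, map_add, map_mul,
      τ.commutes, τ.commutes, map_neg, hτι, neg_neg]
  have hγbK : γb ∈ K := hτγ ▸ hτK γ hγ
  have hτγb : τ γb = γ := by rw [← hτγ]; exact hτ2 γ hγ
  have hγb0 : γb ≠ 0 := by
    rw [← hτγ]
    intro h
    exact hγ0 (by simpa using congrArg τ.symm h)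
  have hσ0ι : σ0 ι = ι := by
    rcases hζsq with h | h
    · rw [← h, map_pow, hσ0ζ]
    · have h' : ι = -ζ8 ^ 2 := by rw [h, neg_neg]
      rw [h', map_neg, map_pow, hσ0ζ]
  have hσ0K : ∀ x ∈ K, σ0 x = x := hfixK σ0 hσ0ι
  -- representation of elements of L in the K-span of powers of θ
  have h7K : (7 : E) ∈ K := by
    rw [show ((7:E)) = algebraMap F E 7 from (map_ofNat _ 7).symm]
    exact K.algebraMap_mem 7
  have hγ2K : γ ^ 2 ∈ K := by rw [sq]; exact K.mul_mem hγ hγ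
  have hg2K : (-7 : E) * γ ^ 2 ∈ K := K.mul_mem (K.neg_mem h7K) hγ2K
  have hrep : ∀ x ∈ L, ∃ c : Fin 8 → E, (∀ j, c j ∈ K) ∧
      x = ∑ j : Fin 8, c j * θ ^ (j : ℕ) := by
    intro x hx
    set W : Submodule K E := Submodule.span K (Set.range fun j : Fin 8 => θ ^ (j : ℕ)) with hW
    have hpowW : ∀ m : ℕ, θ ^ m ∈ W := by
      intro m
      induction m using Nat.strong_induction_on with
      | _ m ih =>
        by_cases hm : m < 8
        · exact Submodule.subset_span ⟨⟨m, hm⟩, rfl⟩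
        · push_neg at hm
          have h1 : θ ^ m = (⟨-7 * γ ^ 2, hg2K⟩ : K) • θ ^ (m - 8) := by
            have hsm : (⟨-7 * γ ^ 2, hg2K⟩ : K) • θ ^ (m - 8)
                = (-7 * γ ^ 2) * θ ^ (m - 8) := by
              rw [Algebra.smul_def]; rfl
            rw [hsm, ← hθ, ← pow_add]
            congr 1
            omega
          rw [h1]
          exact W.smul_mem _ (ih (m - 8) (by omega))
    have hone : (1 : E) ∈ W := by simpa using hpowW 0
    have hmulW : ∀ x y : E, x ∈ W → y ∈ W → x * y ∈ W := by
      have hgen : ∀ (i : ℕ), ∀ y ∈ W, θ ^ i * y ∈ W := by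
        intro i y hy
        induction hy using Submodule.span_induction with
        | mem w hw =>
          obtain ⟨j, rfl⟩ := hw
          rw [← pow_add]
          exact hpowW _
        | zero => rw [mul_zero]; exact W.zero_mem
        | add u v hu hv ihu ihv => rw [mul_add]; exact W.add_mem ihu ihv
        | smul a u hu ihu => rw [mul_smul_comm]; exact W.smul_mem _ ihu
      intro x y hx hy
      induction hx using Submodule.span_induction with
      | mem w hw =>
        obtain ⟨j, rfl⟩ := hw
        exact hgen _ y hy
      | zero => rw [zero_mul]; exact W.zero_mem
      | add u v hu hv ihu ihv => rw [add_mul]; exact W.add_mem ihu ihv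
      | smul a u hu ihu => rw [smul_mul_assoc]; exact W.smul_mem _ ihu
    have hxa : x ∈ Algebra.adjoin F ({ι, θ} : Set E) := by
      rw [← IntermediateField.adjoin_toSubalgebra_of_isAlgebraic
        (fun y _ => Algebra.IsAlgebraic.isAlgebraic y)]
      rw [hL] at hx
      exact hx
    have hιW : ι ∈ W := by
      have h1 : ι = (⟨ι, hιK⟩ : K) • (1 : E) := by
        rw [Algebra.smul_def, mul_one]; rfl
      rw [h1]; exact W.smul_mem _ hone
    have hθW : θ ∈ W := by simpa using hpowW 1
    have hle : Algebra.adjoin F ({ι, θ} : Set E) ≤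
        (W.toSubalgebra hone hmulW).restrictScalars F := by
      apply Algebra.adjoin_le
      intro z hz
      have hz' : z = ι ∨ z = θ := hz
      rcases hz' with h | h <;> rw [h]
      · exact hιW
      · exact hθW
    have hxW : x ∈ W := hle hxa
    obtain ⟨c, hc⟩ := (Submodule.mem_span_range_iff_exists_fun _).mp hxW
    refine ⟨fun j => ↑(c j), fun j => (c j).2, ?_⟩
    rw [← hc]
    refine Finset.sum_congr rfl fun j _ => ?_
    rw [Algebra.smul_def]; rfl
  -- σ0-fixed elements of L lie in K
  have hfixed : ∀ x ∈ L, σ0 x = x → x ∈ K := by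
    intro x hxL hfx
    obtain ⟨c, hcK, hcx⟩ := hrep x hxL
    have hpowθ : ∀ m : ℕ, (σ0 ^ m) θ = ζ8 ^ m * θ := by
      intro m
      induction m with
      | zero => simp
      | succ n ihn =>
        rw [pow_succ', AlgEquiv.mul_apply, ihn, map_mul, map_pow, hσ0ζ, hσ0θ]
        ring
    have hKfixm : ∀ m : ℕ, ∀ z ∈ K, (σ0 ^ m) z = z := by
      intro m
      induction m with
      | zero => intro z hz; simp
      | succ n ihn =>
        intro z hz
        rw [pow_succ', AlgEquiv.mul_apply, ihn z hz]
        exact hσ0K z hz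
    have hiter : ∀ m : ℕ, (σ0 ^ m) x = x := by
      intro m
      induction m with
      | zero => simp
      | succ n ihn => rw [pow_succ', AlgEquiv.mul_apply, ihn, hfx]
    have key : ∀ m : ℕ, x = ∑ j : Fin 8, c j * ((ζ8 ^ (j:ℕ)) ^ m) * θ ^ (j:ℕ) := by
      intro m
      calc x = (σ0 ^ m) x := (hiter m).symm
      _ = ∑ j : Fin 8, c j * ((ζ8 ^ (j:ℕ)) ^ m) * θ ^ (j:ℕ) := by
        rw [hcx, map_sum]
        refine Finset.sum_congr rfl fun j _ => ?_
        rw [map_mul, hKfixm m _ (hcK j), map_pow, hpowθ, mul_pow, ← pow_mul,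
          mul_comm m (j:ℕ), pow_mul]
        ring
    have hsum8 : (8 : E) * x
        = ∑ j : Fin 8, c j * (∑ m ∈ Finset.range 8, (ζ8 ^ (j:ℕ)) ^ m) * θ ^ (j:ℕ) := by
      calc (8:E) * x = ∑ _m ∈ Finset.range 8, x := by
            rw [Finset.sum_const, Finset.card_range, nsmul_eq_mul]
            norm_num
      _ = ∑ m ∈ Finset.range 8, ∑ j : Fin 8, c j * ((ζ8 ^ (j:ℕ)) ^ m) * θ ^ (j:ℕ) :=
            Finset.sum_congr rfl fun m _ => key m
      _ = ∑ j : Fin 8, ∑ m ∈ Finset.range 8, c j * ((ζ8 ^ (j:ℕ)) ^ m) * θ ^ (j:ℕ) :=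
            Finset.sum_comm
      _ = ∑ j : Fin 8, c j * (∑ m ∈ Finset.range 8, (ζ8 ^ (j:ℕ)) ^ m) * θ ^ (j:ℕ) := by
            refine Finset.sum_congr rfl fun j _ => ?_
            rw [Finset.mul_sum, Finset.sum_mul]
    have hgeom : ∀ j : Fin 8, (j:ℕ) ≠ 0 → ∑ m ∈ Finset.range 8, (ζ8 ^ (j:ℕ)) ^ m = 0 := by
      intro j hj
      have hne1 : ζ8 ^ (j:ℕ) ≠ 1 := hζ8.pow_ne_one_of_pos_of_lt hj j.2
      rw [geom_sum_eq hne1]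
      have h8 : (ζ8 ^ (j:ℕ)) ^ 8 = 1 := by
        rw [← pow_mul, mul_comm, pow_mul, hζpow, one_pow]
      rw [h8, sub_self, zero_div]
    have hx0 : (8:E) * x = (8:E) * c 0 := by
      rw [hsum8, Fintype.sum_eq_single (0 : Fin 8)]
      · simp [mul_comm]
      · intro j hj
        have hj' : (j:ℕ) ≠ 0 := fun h => hj (Fin.ext h)
        rw [hgeom j hj', mul_zero, zero_mul]
    have hxc0 : x = c 0 := by
      have h8 : (8:E) ≠ 0 := by norm_num
      exact mul_left_cancel₀ h8 hx0
    rw [hxc0]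
    exact hcK 0
  -- adjoin is unchanged under multiplying θ by a nonzero element of K
  have hadj : ∀ ρ : E, ρ ∈ K → ρ ≠ 0 →
      IntermediateField.adjoin F {ι, ρ * θ} = IntermediateField.adjoin F {ι, θ} := by
    intro ρ hρ hρ0
    have hρ1 : ρ ∈ IntermediateField.adjoin F {ι, θ} :=
      IntermediateField.adjoin.mono F _ _ (by simp : ({ι}:Set E) ⊆ {ι, θ}) hρ
    have hρ2 : ρ ∈ IntermediateField.adjoin F {ι, ρ * θ} :=
      IntermediateField.adjoin.mono F _ _ (by simp : ({ι}:Set E) ⊆ {ι, ρ * θ}) hρ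
    apply le_antisymm
    · rw [IntermediateField.adjoin_le_iff]
      intro z hz
      have hz' : z = ι ∨ z = ρ * θ := hz
      rcases hz' with h | h <;> rw [h]
      · exact IntermediateField.subset_adjoin F _ (by simp)
      · exact mul_mem hρ1 (IntermediateField.subset_adjoin F _ (by simp))
    · rw [IntermediateField.adjoin_le_iff]
      intro z hz
      have hz' : z = ι ∨ z = θ := hz
      rcases hz' with h | h <;> rw [h]
      · exact IntermediateField.subset_adjoin F _ (by simp)
      · have hmem : ρ⁻¹ * (ρ * θ) ∈ IntermediateField.adjoin F {ι, ρ * θ} :=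
          (IntermediateField.adjoin F {ι, ρ * θ}).mul_mem
            ((IntermediateField.adjoin F {ι, ρ * θ}).inv_mem hρ2)
            (IntermediateField.subset_adjoin F {ι, ρ * θ} (Set.mem_insert_of_mem _ rfl))
        rwa [← mul_assoc, inv_mul_cancel₀ hρ0, one_mul] at hmem
  have hθL : θ ∈ L := by rw [hL]; exact IntermediateField.subset_adjoin F _ (by simp)
  have hσ1ι : σ1 ι = ι ∨ σ1 ι = -ι := by
    have h2 : (σ1 ι) ^ 2 = -1 := by rw [← map_pow, hι, map_neg, map_one]
    have h0 : (σ1 ι - ι) * (σ1 ι + ι) = 0 := by linear_combination h2 - hι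
    rcases mul_eq_zero.mp h0 with h | h
    · exact Or.inl (sub_eq_zero.mp h)
    · exact Or.inr (eq_neg_of_add_eq_zero_left h)
  rcases hσ1ι with hcase | hcase
  · -- Case I : σ1 fixes K pointwise, hence γb = ±γ
    have hσ1γ : σ1 γ = γ := hfixK σ1 hcase γ hγ
    have h2 : σ1 (θ ^ 8) = -7 * γ ^ 2 := by
      rw [hθ, map_mul, map_pow, hσ1γ, map_neg, map_ofNat]
    have hγb2 : -7 * γb ^ 2 = -7 * γ ^ 2 := by
      rw [← hσ1θ, ← map_pow, h2]
    have hdich : γb = γ ∨ γb = -γ := by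
      have h0 : (γb - γ) * (γb + γ) = 0 := by linear_combination (-(1:E)/7) * hγb2
      rcases mul_eq_zero.mp h0 with h | h
      · exact Or.inl (sub_eq_zero.mp h)
      · exact Or.inr (eq_neg_of_add_eq_zero_left h)
    rcases hdich with hd | hd
    · -- γ is in F
      have hfxγ : τ γ = γ := by rw [hτγ, hd]
      obtain ⟨a, ha⟩ := hτfix γ hγ hfxγ
      exact ⟨a, θ, by rw [hθ, ha], hL⟩
    · -- γ = bι : use θ' = (1+ζ8)θ
      obtain ⟨a, b, hab⟩ := hP1 γ hγ
      have hfxγ : τ γ = -γ := by rw [hτγ, hd]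
      rw [hab, map_add, map_mul, τ.commutes, τ.commutes, hτι] at hfxγ
      have ha0 : algebraMap F E a = 0 := by linear_combination ((1:E)/2) * hfxγ
      have hγeq : γ = algebraMap F E b * ι := by rw [hab, ha0, zero_add]
      have hlam0 : (1:E) + ζ8 ≠ 0 := by
        intro h0
        have hm1 : ζ8 = -1 := by linear_combination h0
        have h2' : ζ8 ^ 2 = 1 := by rw [hm1]; ring
        exact hζ8.pow_ne_one_of_pos_of_lt (l := 2) (by norm_num) (by norm_num) h2'
      have hlam8 : ((1:E) + ζ8) ^ 8 = -(2 + (ζ8 + ζ8 ^ 7)) ^ 4 := by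
        linear_combination (17 + 40*ζ8 + 52*ζ8^2 + 64*ζ8^3 + 54*ζ8^4 + 16*ζ8^5 - 24*ζ8^6
          - 24*ζ8^7 - 5*ζ8^8 + 8*ζ8^9 + 28*ζ8^10 + 24*ζ8^11 + 5*ζ8^12 - 8*ζ8^13 - 4*ζ8^14
          + ζ8^16 + 8*ζ8^17 + 4*ζ8^18 - ζ8^20 + ζ8^24) * hζ4
      have hmemlam : (1:E) + ζ8 ∈ K := K.add_mem K.one_mem hζK
      rcases hScases with hSc | hSc
      · refine ⟨(2 + s) ^ 2 * b, (1 + ζ8) * θ, ?_, ?_⟩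
        · rw [mul_pow, hlam8, hθ, hSc, hγeq]
          have hmap : algebraMap F E ((2 + s) ^ 2 * b)
              = (2 + algebraMap F E s) ^ 2 * algebraMap F E b := by
            rw [map_mul, map_pow, map_add, map_ofNat]
          rw [hmap]
          linear_combination (7 * (2 + algebraMap F E s)^4 * (algebraMap F E b)^2) * hι
        · rw [hL]; exact (hadj (1 + ζ8) hmemlam hlam0).symm
      · refine ⟨(2 - s) ^ 2 * b, (1 + ζ8) * θ, ?_, ?_⟩
        · rw [mul_pow, hlam8, hθ, hSc, hγeq]
          have hmap : algebraMap F E ((2 - s) ^ 2 * b)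
              = (2 - algebraMap F E s) ^ 2 * algebraMap F E b := by
            rw [map_mul, map_pow, map_sub, map_ofNat]
          rw [hmap]
          linear_combination (7 * (2 - algebraMap F E s)^4 * (algebraMap F E b)^2) * hι
        · rw [hL]; exact (hadj (1 + ζ8) hmemlam hlam0).symm
  · -- Case II : σ1 acts as conjugation on K
    have hσ1ζ7 : σ1 ζ8 = ζ8 ^ 7 := hconjζ σ1 hcase
    have hstab : ∀ x ∈ L, σ1 x ∈ L := by
      intro x hx
      have h := AlgEquiv.restrictNormal_commutes σ1 (↥L) ⟨x, hx⟩
      have h2 : σ1 x = ((σ1.restrictNormal ↥L) ⟨x, hx⟩ : E) := h.symm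
      rw [h2]
      exact SetLike.coe_mem _
    have huL : σ1 θ ∈ L := hstab θ hθL
    have hu0 : σ1 θ ≠ 0 := by
      intro h0
      rw [h0] at hσ1θ
      have h1 : (0:E) = -7 * γb ^ 2 := by simpa using hσ1θ.symm
      have h2 : γb ^ 2 = 0 := by linear_combination ((1:E)/7) * h1
      exact hγb0 (pow_eq_zero_iff (n := 2) (by norm_num) |>.mp h2)
    -- the relation gives σ0 (σ1 θ) = ζ8 * σ1 θ
    have hpowθ : ∀ m : ℕ, (σ0 ^ m) θ = ζ8 ^ m * θ := by
      intro m
      induction m with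
      | zero => simp
      | succ n ihn =>
        rw [pow_succ', AlgEquiv.mul_apply, ihn, map_mul, map_pow, hσ0ζ, hσ0θ]
        ring
    have hσ0u : σ0 (σ1 θ) = ζ8 * σ1 θ := by
      have hrelθ := hrel θ hθL
      rw [AlgEquiv.mul_apply, AlgEquiv.mul_apply, hpowθ 7, map_mul, map_pow, hσ1ζ7] at hrelθ
      have hζ49 : ((ζ8 ^ 7) ^ 7 : E) = ζ8 := by
        have h1 : ((ζ8^7)^7 : E) = (ζ8^8)^6 * ζ8 := by ring
        rw [h1, hζpow, one_pow, one_mul]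
      rw [hζ49] at hrelθ
      exact hrelθ
    -- μ = σ1 θ / θ is σ0-fixed, hence lies in K
    have hμL : σ1 θ * θ⁻¹ ∈ L := L.mul_mem huL (L.inv_mem hθL)
    have hμ0 : σ1 θ * θ⁻¹ ≠ 0 := mul_ne_zero hu0 (inv_ne_zero hθ0)
    have hζ0 : ζ8 ≠ 0 := by
      intro h0
      rw [h0] at hζpow
      norm_num at hζpow
    have hσ0μ : σ0 (σ1 θ * θ⁻¹) = σ1 θ * θ⁻¹ := by
      calc σ0 (σ1 θ * θ⁻¹) = (ζ8 * σ1 θ) * (ζ8 * θ)⁻¹ := by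
            rw [map_mul, map_inv₀, hσ0θ, hσ0u]
      _ = (ζ8 * ζ8⁻¹) * (σ1 θ * θ⁻¹) := by rw [mul_inv]; ring
      _ = σ1 θ * θ⁻¹ := by rw [mul_inv_cancel₀ hζ0, one_mul]
    have hμK : σ1 θ * θ⁻¹ ∈ K := hfixed _ hμL hσ0μ
    have hμθ : σ1 θ = (σ1 θ * θ⁻¹) * θ := by field_simp
    have hμ8 : (σ1 θ * θ⁻¹) ^ 8 * γ ^ 2 = γb ^ 2 := by
      have h1 : ((σ1 θ * θ⁻¹) * θ) ^ 8 = -7 * γb ^ 2 := by rw [← hμθ]; exact hσ1θ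
      have h2 : (σ1 θ * θ⁻¹) ^ 8 * (-7 * γ ^ 2) = -7 * γb ^ 2 := by
        rw [← hθ]
        linear_combination h1
      linear_combination (-(1:E)/7) * h2
    have hσ1u : σ1 (σ1 θ) = θ := by
      have h1 := hord1 θ hθL
      rwa [sq, AlgEquiv.mul_apply] at h1
    have hτμ : τ (σ1 θ * θ⁻¹) * (σ1 θ * θ⁻¹) = 1 := by
      have h1 : σ1 (σ1 θ * θ⁻¹) = τ (σ1 θ * θ⁻¹) := hconjK σ1 τ hcase hτι _ hμK
      have h2 : σ1 (σ1 θ * θ⁻¹) = θ * (σ1 θ)⁻¹ := by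
        rw [map_mul, map_inv₀, hσ1u]
      rw [← h1, h2]
      field_simp
    -- Hilbert 90
    have hlamζ0 : (1:E) + ζ8 ≠ 0 := by
      intro h0
      have hm1 : ζ8 = -1 := by linear_combination h0
      have h2' : ζ8 ^ 2 = 1 := by rw [hm1]; ring
      exact hζ8.pow_ne_one_of_pos_of_lt (l := 2) (by norm_num) (by norm_num) h2'
    obtain ⟨lam, hlamK, hlam0, hlameq⟩ :
        ∃ lam : E, lam ∈ K ∧ lam ≠ 0 ∧ (σ1 θ * θ⁻¹) * τ lam = lam := by
      by_cases hm : σ1 θ * θ⁻¹ = -1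
      · exact ⟨ι, hιK, hι0, by rw [hτι, hm]; ring⟩
      · refine ⟨1 + σ1 θ * θ⁻¹, K.add_mem K.one_mem hμK, ?_, ?_⟩
        · intro h0; exact hm (by linear_combination h0)
        · rw [map_add, map_one]
          have hτμK : τ (σ1 θ * θ⁻¹) = τ (σ1 θ * θ⁻¹) := rfl
          linear_combination hτμ
    -- dichotomy for μ⁴
    have hμ4 : (σ1 θ * θ⁻¹) ^ 4 * γ = γb ∨ (σ1 θ * θ⁻¹) ^ 4 * γ = -γb := by
      have h0 : ((σ1 θ * θ⁻¹)^4*γ - γb) * ((σ1 θ * θ⁻¹)^4*γ + γb) = 0 := by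
        linear_combination hμ8
      rcases mul_eq_zero.mp h0 with h | h
      · exact Or.inl (sub_eq_zero.mp h)
      · exact Or.inr (eq_neg_of_add_eq_zero_left h)
    obtain ⟨ρ, hρK, hρ0, hρfix⟩ : ∃ ρ : E, ρ ∈ K ∧ ρ ≠ 0 ∧ τ (γ * ρ ^ 4) = γ * ρ ^ 4 := by
      rcases hμ4 with h4 | h4
      · refine ⟨lam, hlamK, hlam0, ?_⟩
        calc τ (γ * lam ^ 4) = γb * (τ lam) ^ 4 := by rw [map_mul, map_pow, hτγ]
        _ = ((σ1 θ * θ⁻¹) ^ 4 * γ) * (τ lam) ^ 4 := by rw [h4]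
        _ = γ * ((σ1 θ * θ⁻¹) * τ lam) ^ 4 := by ring
        _ = γ * lam ^ 4 := by rw [hlameq]
      · have hτ1ζ : τ (1 + ζ8) = ζ8 ^ 7 * (1 + ζ8) := by
          rw [map_add, map_one, hτζ]
          linear_combination -hζpow
        have hζ28 : ((ζ8 ^ 7 : E)) ^ 4 = -1 := by
          have h1 : ((ζ8^7)^4 : E) = (ζ8^8)^3 * ζ8^4 := by ring
          rw [h1, hζpow, one_pow, one_mul, hζ4]
        refine ⟨(1 + ζ8) * lam, K.mul_mem (K.add_mem K.one_mem hζK) hlamK,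
          mul_ne_zero hlamζ0 hlam0, ?_⟩
        calc τ (γ * ((1 + ζ8) * lam) ^ 4)
            = γb * ((ζ8 ^ 7 * (1 + ζ8)) * τ lam) ^ 4 := by
              rw [map_mul, map_pow, hτγ, map_mul, hτ1ζ]
        _ = γb * (ζ8 ^ 7) ^ 4 * (1 + ζ8) ^ 4 * (τ lam) ^ 4 := by ring
        _ = -γb * (1 + ζ8) ^ 4 * (τ lam) ^ 4 := by rw [hζ28]; ring
        _ = ((σ1 θ * θ⁻¹) ^ 4 * γ) * (1 + ζ8) ^ 4 * (τ lam) ^ 4 := by rw [h4]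
        _ = γ * (1 + ζ8) ^ 4 * ((σ1 θ * θ⁻¹) * τ lam) ^ 4 := by ring
        _ = γ * ((1 + ζ8) * lam) ^ 4 := by rw [hlameq]; ring
    have hγ''K : γ * ρ ^ 4 ∈ K := K.mul_mem hγ (pow_mem hρK 4)
    obtain ⟨a, ha⟩ := hτfix _ hγ''K hρfix
    refine ⟨a, ρ * θ, ?_, ?_⟩
    · rw [mul_pow, hθ, ← ha]
      ring
    · rw [hL]; exact (hadj ρ hρK hρ0).symm

/-- Lemma on the embedding problem for the pair `(<16,7>,<8,3>)` for twists of
the Klein quartic: if `i ∉ k`, `√2 ∈ k`, `γ ∈ k(i)` is nonzero and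
`L = k(i, ⁸√(-7γ²))` is Galois of degree 16 over `k` with Galois group
generated by `σ₀ : ζ₈ ↦ ζ₈, θ ↦ ζ₈θ` and `σ₁ : ζ₈ ↦ ζ₈^e, θ ↦ ⁸√(-7γ̄²)`
satisfying `σ₀⁸ = σ₁² = 1` and `σ₀σ₁ = σ₁σ₀⁷`, then one may take `γ ∈ k`:
`L = k(i, ⁸√(-7γ'²))` for some `γ'` in `k`. -/
theorem klein_embedding_problem_16_7
    (k : Type*) [Field k] [CharZero k]
    (hik : ¬ ∃ x : k, x ^ 2 = -1)
    (h2k : ∃ s : k, s ^ 2 = 2)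
    (ι ζ8 θ γ γb : AlgebraicClosure k)
    (hι : ι ^ 2 = -1)
    (hζ8 : IsPrimitiveRoot ζ8 8)
    (hγ : γ ∈ IntermediateField.adjoin k {ι}) (hγ0 : γ ≠ 0)
    (hγb : ∃ τ : AlgebraicClosure k ≃ₐ[k] AlgebraicClosure k,
      τ ι = -ι ∧ τ γ = γb)
    (hθ : θ ^ 8 = -7 * γ ^ 2)
    (L : IntermediateField k (AlgebraicClosure k))
    (hL : L = IntermediateField.adjoin k {ι, θ})
    (hGal : IsGalois k L)
    (hdeg : Module.finrank k L = 16)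
    (σ0 σ1 : AlgebraicClosure k ≃ₐ[k] AlgebraicClosure k)
    (hσ0ζ : σ0 ζ8 = ζ8)
    (hσ0θ : σ0 θ = ζ8 * θ)
    (hσ1ζ : ∃ e : ℕ, σ1 ζ8 = ζ8 ^ e)
    (hσ1θ : (σ1 θ) ^ 8 = -7 * γb ^ 2)
    (hord0 : ∀ x ∈ L, (σ0 ^ 8) x = x)
    (hord1 : ∀ x ∈ L, (σ1 ^ 2) x = x)
    (hrel : ∀ x ∈ L, (σ0 * σ1) x = (σ1 * σ0 ^ 7) x) :
    ∃ (γ' : k) (θ' : AlgebraicClosure k),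
      θ' ^ 8 = -7 * (algebraMap k (AlgebraicClosure k) γ') ^ 2 ∧
      L = IntermediateField.adjoin k {ι, θ'} := by
  obtain ⟨τ, hτι, hτγ⟩ := hγb
  exact klein_embedding_problem_16_7_aux k (AlgebraicClosure k) h2k ι ζ8 θ γ γb
    hι hζ8 hγ hγ0 τ hτι hτγ hθ L hL hGal σ0 σ1 hσ0ζ hσ0θ hσ1θ hord1 hrel
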